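/- Let 𝔽 be a field, A ⊆ 𝔽 a finite set, and 𝒱 ⊆ A^n a finite point set. Then the set of standard monomials Sm(I(𝒱)) is the same for every lexicographic term order if and only if Sm(I(𝒱)) is the same for every term order. -/

import Mathlib

open MvPolynomial

/-- Monomials of `𝔽[x_1,…,x_n]` identified with their exponent vectors. -/
abbrev Mon (n : ℕ) := Fin n →₀ ℕ

/-- A linear order on monomials is a term order if `1` (i.e. the zero exponent
vector) is minimal and the order is compatible with multiplication by monomials. -/
def IsTermOrder {n : ℕ} (lin : LinearOrder (Mon n)) : Prop :=
  (∀ u : Mon n, lin.le 0 u) ∧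
    ∀ u v w : Mon n, lin.le u v → lin.le (u + w) (v + w)

/-- The strict lexicographic comparison of exponent vectors induced by the variable
ordering `x_{σ 0} ≻ x_{σ 1} ≻ ⋯ ≻ x_{σ (n-1)}`. -/
def lexLt {n : ℕ} (σ : Equiv.Perm (Fin n)) (u v : Mon n) : Prop :=
  ∃ j : Fin n, u (σ j) < v (σ j) ∧ ∀ i : Fin n, i < j → u (σ i) = v (σ i)

/-- `lin` is the lexicographic term order induced by the variable ordering
`x_{σ 0} ≻ x_{σ 1} ≻ ⋯ ≻ x_{σ (n-1)}`. -/
def IsLexOrder {n : ℕ} (σ : Equiv.Perm (Fin n)) (lin : LinearOrder (Mon n)) : Prop :=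
  ∀ u v : Mon n, lin.lt u v ↔ lexLt σ u v

/-- `m` is the leading monomial of `f` with respect to the monomial order `lin`. -/
def IsLeadMon {n : ℕ} {F : Type*} [CommSemiring F] (lin : LinearOrder (Mon n))
    (f : MvPolynomial (Fin n) F) (m : Mon n) : Prop :=
  m ∈ f.support ∧ ∀ m' ∈ f.support, lin.le m' m

/-- The set of standard monomials of an ideal `I` with respect to the monomial
order `lin`: monomials that are not the leading monomial of any nonzero `f ∈ I`. -/
def stdMon {n : ℕ} {F : Type*} [CommSemiring F] (lin : LinearOrder (Mon n))
    (I : Ideal (MvPolynomial (Fin n) F)) : Set (Mon n) :=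
  { m | ¬ ∃ f ∈ I, f ≠ 0 ∧ IsLeadMon lin f m }

/-- The vanishing ideal of a point set `V ⊆ F^n`. -/
def vanishIdeal {n : ℕ} {F : Type*} [CommRing F] (V : Set (Fin n → F)) :
    Ideal (MvPolynomial (Fin n) F) where
  carrier := { f | ∀ v ∈ V, MvPolynomial.eval v f = 0 }
  add_mem' := by
    intro a b ha hb v hv
    simp [map_add, ha v hv, hb v hv]
  zero_mem' := by intro v hv; simp
  smul_mem' := by
    intro c f hf v hv
    simp [smul_eq_mul, hf v hv]

/-- A finite point set (in `{0,…,k-1}^n`, over any field) is extremal if its vanishing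
ideal has the same standard monomials for every lexicographic term order. -/
def IsExtremal {n : ℕ} {F : Type*} [CommRing F] (V : Set (Fin n → F)) : Prop :=
  ∀ (σ₁ σ₂ : Equiv.Perm (Fin n)) (lin₁ lin₂ : LinearOrder (Mon n)),
    IsLexOrder σ₁ lin₁ → IsLexOrder σ₂ lin₂ →
      stdMon lin₁ (vanishIdeal V) = stdMon lin₂ (vanishIdeal V)

/-- Embedding of a point of `{0,…,k-1}^n` into `F^n`. -/
def toField {n k : ℕ} (F : Type*) [Field F] (w : Fin n → Fin k) : Fin n → F :=
  fun i => ((w i : ℕ) : F)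

/-- Identification of a point of `{0,…,k-1}^n` with an exponent vector in `ℕ^n`. -/
noncomputable def toExp {n k : ℕ} (w : Fin n → Fin k) : Mon n :=
  Finsupp.equivFunOnFinite.symm fun i => (w i : ℕ)

/-- The downshift `D_i(V)` of `V ⊆ {0,…,k-1}^n` at coordinate `i`: its `i`-section at
each choice of the other coordinates is `{0,1,…,m-1}` where `m` is the size of the
corresponding `i`-section of `V`. -/
def downshift {n k : ℕ} (V : Finset (Fin n → Fin k)) (i : Fin n) :
    Finset (Fin n → Fin k) :=
  Finset.univ.filter fun w =>
    (w i : ℕ) < (Finset.univ.filter fun α : Fin k => Function.update w i α ∈ V).card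

/-- The iterated downshift `D_{σ(n-1)}(D_{σ(n-2)}(⋯(D_{σ 0}(V))))`,
i.e. downshifts are applied at coordinates `σ 0, σ 1, …, σ (n-1)` in this order. -/
def iterDownshift {n k : ℕ} (σ : Equiv.Perm (Fin n)) (V : Finset (Fin n → Fin k)) :
    Finset (Fin n → Fin k) :=
  (List.ofFn fun j : Fin n => σ j).foldl downshift V

/-- A polynomial is degree dominated (with dominating term `x^w`) if it equals
`x^w + Σ αᵢ x^{vᵢ}` where each `x^{vᵢ}` divides `x^w`. -/
def IsDegDominated {n : ℕ} {F : Type*} [CommSemiring F]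
    (f : MvPolynomial (Fin n) F) : Prop :=
  ∃ w : Mon n, MvPolynomial.coeff w f = 1 ∧ ∀ v ∈ f.support, v ≤ w

/-- `G` is a Gröbner basis of `I` with respect to the monomial order `lin`:
`G ⊆ I` and for every nonzero `f ∈ I` some `g ∈ G` has leading monomial dividing
the leading monomial of `f` (divisibility of monomials being `≤` of exponents). -/
def IsGroebner {n : ℕ} {F : Type*} [CommSemiring F] (lin : LinearOrder (Mon n))
    (G : Finset (MvPolynomial (Fin n) F)) (I : Ideal (MvPolynomial (Fin n) F)) : Prop :=
  (∀ g ∈ G, g ∈ I) ∧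
    ∀ f ∈ I, f ≠ 0 → ∀ m : Mon n, IsLeadMon lin f m →
      ∃ g ∈ G, ∃ mg : Mon n, IsLeadMon lin g mg ∧ mg ≤ m

/-- `G` is a universal Gröbner basis of `I` if it is a Gröbner basis for every term order. -/
def IsUnivGroebner {n : ℕ} {F : Type*} [CommSemiring F]
    (G : Finset (MvPolynomial (Fin n) F)) (I : Ideal (MvPolynomial (Fin n) F)) : Prop :=
  ∀ lin : LinearOrder (Mon n), IsTermOrder lin → IsGroebner lin G I

/-- A term order is an elimination order with respect to `x_i` if `x_i` is greater
than every monomial not involving `x_i`. -/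
def IsElimOrder {n : ℕ} (lin : LinearOrder (Mon n)) (i : Fin n) : Prop :=
  IsTermOrder lin ∧ ∀ m : Mon n, m i = 0 → lin.lt m (Finsupp.single i 1)

/-- A set system `𝓕` shatters `S` if every subset of `S` is the intersection of `S`
with a member of `𝓕`. -/
def Shatters {n : ℕ} (𝓕 : Finset (Finset (Fin n))) (S : Finset (Fin n)) : Prop :=
  ∀ T ⊆ S, ∃ Fm ∈ 𝓕, Fm ∩ S = T

open scoped Classical in
/-- The family `Sh(𝓕)` of sets shattered by `𝓕`. -/
noncomputable def shatteredFamily {n : ℕ} (𝓕 : Finset (Finset (Fin n))) :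
    Finset (Finset (Fin n)) :=
  Finset.univ.filter fun S => Shatters 𝓕 S

/-- A set system is shattering-extremal if it shatters exactly `|𝓕|` sets. -/
def IsSExtremal {n : ℕ} (𝓕 : Finset (Finset (Fin n))) : Prop :=
  (shatteredFamily 𝓕).card = 𝓕.card

/-- The characteristic vector of a set, as a point of `F^n`. -/
def charVec {n : ℕ} (F : Type*) [Field F] (Fm : Finset (Fin n)) : Fin n → F :=
  fun i => if i ∈ Fm then 1 else 0

/-- The squarefree monomial `∏_{i ∈ S} x_i` associated to a set `S ⊆ [n]`,
as an exponent vector. -/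
noncomputable def setMon {n : ℕ} (S : Finset (Fin n)) : Mon n :=
  Finsupp.equivFunOnFinite.symm fun i => if i ∈ S then 1 else 0

/-- The polynomial `f_{S,H} = (∏_{i∈H} x_i) ⬝ ∏_{i∈S∖H} (x_i - 1)`. -/
noncomputable def fSH {n : ℕ} (F : Type*) [Field F] (S H : Finset (Fin n)) :
    MvPolynomial (Fin n) F :=
  (∏ i ∈ H, X i) * ∏ i ∈ S \ H, (X i - 1)

/-- The downshift `D_i(𝓕)` of a set system. -/
def dshiftSet {n : ℕ} (𝓕 : Finset (Finset (Fin n))) (i : Fin n) :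
    Finset (Finset (Fin n)) :=
  𝓕.image (fun Fm => Fm.erase i) ∪ 𝓕.filter fun Fm => i ∈ Fm ∧ Fm.erase i ∈ 𝓕

/-- The iterated downshift `D_{σ(n-1)}(⋯(D_{σ 0}(𝓕)))` of a set system:
downshifts are applied at `σ 0, σ 1, …, σ (n-1)` in this order. -/
def iterDshiftSet {n : ℕ} (σ : Equiv.Perm (Fin n)) (𝓕 : Finset (Finset (Fin n))) :
    Finset (Finset (Fin n)) :=
  (List.ofFn fun j : Fin n => σ j).foldl dshiftSet 𝓕

/-- Restriction of an exponent vector in `ℕ^{n+1}` to its first `n` coordinates. -/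
noncomputable def restrictMon {n : ℕ} (w : Mon (n + 1)) : Mon n :=
  Finsupp.equivFunOnFinite.symm fun i => w i.castSucc


/-! ### Auxiliary machinery -/

section Aux

variable {n : ℕ}

private lemma lexEmb_inj (σ : Equiv.Perm (Fin n)) :
    Function.Injective (fun u : Mon n => toLex fun j : Fin n => u (σ j)) := by
  intro u v h
  have h' : (fun j : Fin n => u (σ j)) = fun j => v (σ j) := toLex_inj.mp h
  ext i
  simpa using congrFun h' (σ.symm i)

/-- The lexicographic linear order on monomials induced by `σ`. -/
noncomputable def lexPiLO (n : ℕ) : LinearOrder (Lex (Fin n → ℕ)) :=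
  @Pi.Lex.linearOrder _ _ _
    (inferInstance : WellFoundedLT (Fin n)) _

noncomputable def lexLO (σ : Equiv.Perm (Fin n)) : LinearOrder (Mon n) :=
  @LinearOrder.lift' (Mon n) (Lex (Fin n → ℕ)) (lexPiLO n)
    (fun u : Mon n => toLex fun j : Fin n => u (σ j)) (lexEmb_inj σ)

lemma lexLO_lt_iff (σ : Equiv.Perm (Fin n)) (u v : Mon n) :
    (lexLO σ).lt u v ↔ lexLt σ u v := by
  show Pi.Lex (· < ·) (fun {_} => (· < ·)) (fun j => u (σ j)) (fun j => v (σ j)) ↔ lexLt σ u v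
  unfold Pi.Lex lexLt
  exact exists_congr fun j => and_comm

lemma isLexOrder_lexLO (σ : Equiv.Perm (Fin n)) : IsLexOrder σ (lexLO σ) :=
  fun u v => lexLO_lt_iff σ u v

private lemma linLt_of_le_of_ne (lin : LinearOrder (Mon n)) {a b : Mon n}
    (h : lin.le a b) (hne : a ≠ b) : lin.lt a b := by
  rw [lin.lt_iff_le_not_ge]
  exact ⟨h, fun hc => hne (lin.le_antisymm _ _ h hc)⟩

private lemma linLe_of_lt (lin : LinearOrder (Mon n)) {a b : Mon n}
    (h : lin.lt a b) : lin.le a b := ((lin.lt_iff_le_not_ge a b).mp h).1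

lemma IsLexOrder.isTermOrder {σ : Equiv.Perm (Fin n)} {lin : LinearOrder (Mon n)}
    (h : IsLexOrder σ lin) : IsTermOrder lin := by
  classical
  constructor
  · intro u
    rcases eq_or_ne (0 : Mon n) u with rfl | hu
    · exact lin.le_refl 0
    · refine linLe_of_lt lin ?_
      rw [h]
      have hne : (Finset.univ.filter fun j : Fin n => u (σ j) ≠ 0).Nonempty := by
        by_contra hc
        apply hu
        rw [Finset.not_nonempty_iff_eq_empty, Finset.filter_eq_empty_iff] at hc
        ext i
        have h0 : u (σ (σ.symm i)) = 0 := not_not.mp (hc (Finset.mem_univ (σ.symm i)))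
        simpa using h0.symm
      obtain ⟨j, hjmem, hjmin⟩ :
          ∃ j ∈ (Finset.univ.filter fun j : Fin n => u (σ j) ≠ 0),
            ∀ i ∈ (Finset.univ.filter fun j : Fin n => u (σ j) ≠ 0), j ≤ i := by
        obtain ⟨j, hj1, hj2⟩ := Finset.exists_min_image _ id hne
        exact ⟨j, hj1, hj2⟩
      refine ⟨j, ?_, ?_⟩
      · have hj0 : u (σ j) ≠ 0 := (Finset.mem_filter.mp hjmem).2
        simpa using Nat.pos_of_ne_zero hj0
      · intro i hij
        by_contra hc
        have hi0 : u (σ i) ≠ 0 := by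
          intro hz
          exact hc (by simp [hz])
        have hmem : i ∈ (Finset.univ.filter fun j : Fin n => u (σ j) ≠ 0) :=
          Finset.mem_filter.mpr ⟨Finset.mem_univ _, hi0⟩
        exact absurd (hjmin i hmem) (not_le.mpr hij)
  · intro u v w huv
    rcases eq_or_ne u v with rfl | hne
    · exact lin.le_refl _
    · refine linLe_of_lt lin ?_
      rw [h]
      have hlt : lexLt σ u v := (h u v).mp (linLt_of_le_of_ne lin huv hne)
      obtain ⟨j, hj1, hj2⟩ := hlt
      refine ⟨j, ?_, ?_⟩
      · simpa [Finsupp.add_apply] using Nat.add_lt_add_right hj1 (w (σ j))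
      · intro i hi
        simp [Finsupp.add_apply, hj2 i hi]

lemma IsTermOrder.le_of_le {lin : LinearOrder (Mon n)} (h : IsTermOrder lin)
    {u v : Mon n} (huv : u ≤ v) : lin.le u v := by
  obtain ⟨w, rfl⟩ := exists_add_of_le huv
  have := h.2 0 w u (h.1 w)
  simpa [add_comm] using this

lemma IsTermOrder.wf {lin : LinearOrder (Mon n)} (h : IsTermOrder lin) :
    WellFounded lin.lt := by
  rw [RelEmbedding.wellFounded_iff_isEmpty]
  constructor
  intro e
  obtain ⟨m, k, hmk, hle⟩ :=
    wellQuasiOrdered_le (α := Mon n) (fun i => e i)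
  have h1 : lin.le (e m) (e k) := h.le_of_le hle
  have h2 : lin.lt (e k) (e m) := e.map_rel_iff.mpr hmk
  rw [lin.lt_iff_le_not_ge] at h2
  exact h2.2 h1

private lemma exists_linMax (lin : LinearOrder (Mon n)) {s : Finset (Mon n)}
    (hs : s.Nonempty) : ∃ m ∈ s, ∀ x ∈ s, lin.le x m := by
  letI := lin
  obtain ⟨m, hm, hmax⟩ := s.exists_max_image id hs
  exact ⟨m, hm, fun x hx => hmax x hx⟩

variable {F : Type*} [Field F]

private lemma eq_zero_of_supp_subset (lin : LinearOrder (Mon n))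
    {I : Ideal (MvPolynomial (Fin n) F)} {g : MvPolynomial (Fin n) F} (hg : g ∈ I)
    (hs : ∀ u ∈ g.support, u ∈ stdMon lin I) : g = 0 := by
  by_contra hne
  obtain ⟨m, hm, hmax⟩ := exists_linMax lin (MvPolynomial.support_nonempty.mpr hne)
  exact hs m hm ⟨g, hg, hne, hm, hmax⟩

private lemma reduce_step (lin : LinearOrder (Mon n))
    (I : Ideal (MvPolynomial (Fin n) F)) (f : MvPolynomial (Fin n) F)
    (u : Mon n) (hu : u ∉ stdMon lin I) (huf : u ∈ f.support)
    (hmax : ∀ x ∈ f.support, x ∉ stdMon lin I → lin.le x u) :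
    ∃ f', f - f' ∈ I ∧ (∀ x ∈ f'.support, ∃ v ∈ f.support, lin.le x v) ∧
      ∀ x ∈ f'.support, x ∉ stdMon lin I → lin.lt x u := by
  classical
  have hu' : ∃ h ∈ I, h ≠ 0 ∧ IsLeadMon lin h u := not_not.mp hu
  obtain ⟨h, hI, h0, hlm⟩ := hu'
  have hhu : h.coeff u ≠ 0 := MvPolynomial.mem_support_iff.mp hlm.1
  set c : F := f.coeff u * (h.coeff u)⁻¹ with hc
  have hsub : (f - C c * h).support ⊆ f.support ∪ h.support := by
    intro x hx
    rcases Finset.mem_union.mp (MvPolynomial.support_sub _ f (C c * h) hx) with hx' | hx'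
    · exact Finset.mem_union_left _ hx'
    · refine Finset.mem_union_right _ ?_
      have := MvPolynomial.support_smul (a := c) (f := h)
      rw [MvPolynomial.smul_eq_C_mul] at this
      exact this hx'
  have hcu : (f - C c * h).coeff u = 0 := by
    rw [MvPolynomial.coeff_sub, MvPolynomial.coeff_C_mul, hc]
    field_simp
    simp
  refine ⟨f - C c * h, by simpa using I.mul_mem_left (C c) hI, ?_, ?_⟩
  · intro x hx
    rcases Finset.mem_union.mp (hsub hx) with hx' | hx'
    · exact ⟨x, hx', lin.le_refl x⟩
    · exact ⟨u, huf, hlm.2 x hx'⟩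
  · intro x hx hxD
    have hxu : x ≠ u := by
      intro he
      rw [he] at hx
      exact MvPolynomial.mem_support_iff.mp hx hcu
    rcases Finset.mem_union.mp (hsub hx) with hx' | hx'
    · exact linLt_of_le_of_ne lin (hmax x hx' hxD) hxu
    · exact linLt_of_le_of_ne lin (hlm.2 x hx') hxu

private lemma reduce {lin : LinearOrder (Mon n)} (hwf : WellFounded lin.lt)
    (I : Ideal (MvPolynomial (Fin n) F)) (f : MvPolynomial (Fin n) F) :
    ∃ g, f - g ∈ I ∧ (∀ u ∈ g.support, u ∈ stdMon lin I) ∧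
      ∀ u ∈ g.support, ∃ v ∈ f.support, lin.le u v := by
  classical
  have main : ∀ m : Mon n, ∀ f : MvPolynomial (Fin n) F,
      (∀ u ∈ f.support, u ∉ stdMon lin I → lin.le u m) →
      ∃ g, f - g ∈ I ∧ (∀ u ∈ g.support, u ∈ stdMon lin I) ∧
        ∀ u ∈ g.support, ∃ v ∈ f.support, lin.le u v := by
    intro m
    induction m using hwf.induction with
    | _ m IH =>
      intro f hbound
      by_cases hall : ∀ u ∈ f.support, u ∈ stdMon lin I
      · exact ⟨f, by simpa using I.zero_mem, hall, fun u hu => ⟨u, hu, lin.le_refl u⟩⟩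
      · push_neg at hall
        obtain ⟨u₀, hu₀f, hu₀D⟩ := hall
        have hne : (f.support.filter fun u => u ∉ stdMon lin I).Nonempty :=
          ⟨u₀, Finset.mem_filter.mpr ⟨hu₀f, hu₀D⟩⟩
        obtain ⟨us, husmem, husmax⟩ := exists_linMax lin hne
        have hus_f : us ∈ f.support := (Finset.mem_filter.mp husmem).1
        have hus_D : us ∉ stdMon lin I := (Finset.mem_filter.mp husmem).2
        obtain ⟨f', hf'I, hf'le, hf'lt⟩ := reduce_step lin I f us hus_D hus_f
          (fun x hx hxD => husmax x (Finset.mem_filter.mpr ⟨hx, hxD⟩))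
        by_cases hall' : ∀ u ∈ f'.support, u ∈ stdMon lin I
        · refine ⟨f', hf'I, hall', fun u hu => hf'le u hu⟩
        · push_neg at hall'
          obtain ⟨u₁, hu₁f, hu₁D⟩ := hall'
          have hne' : (f'.support.filter fun u => u ∉ stdMon lin I).Nonempty :=
            ⟨u₁, Finset.mem_filter.mpr ⟨hu₁f, hu₁D⟩⟩
          obtain ⟨u', hu'mem, hu'max⟩ := exists_linMax lin hne'
          have hu'f : u' ∈ f'.support := (Finset.mem_filter.mp hu'mem).1
          have hu'D : u' ∉ stdMon lin I := (Finset.mem_filter.mp hu'mem).2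
          have hu'us : lin.lt u' us := hf'lt u' hu'f hu'D
          have husm : lin.le us m := hbound us hus_f hus_D
          have hu'm : lin.lt u' m := by
            rw [lin.lt_iff_le_not_ge] at hu'us ⊢
            exact ⟨lin.le_trans _ _ _ hu'us.1 husm,
              fun hc => hu'us.2 (lin.le_trans _ _ _ husm hc)⟩
          obtain ⟨g, hg1, hg2, hg3⟩ := IH u' hu'm f'
            (fun x hx hxD => hu'max x (Finset.mem_filter.mpr ⟨hx, hxD⟩))
          refine ⟨g, ?_, hg2, ?_⟩
          · have := I.add_mem hf'I hg1
            simpa [sub_add_sub_cancel] using this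
          · intro u hu
            obtain ⟨v, hv, hle⟩ := hg3 u hu
            obtain ⟨v', hv', hle'⟩ := hf'le v hv
            exact ⟨v', hv', lin.le_trans _ _ _ hle hle'⟩
  by_cases hall : ∀ u ∈ f.support, u ∈ stdMon lin I
  · exact ⟨f, by simpa using I.zero_mem, hall, fun u hu => ⟨u, hu, lin.le_refl u⟩⟩
  · push_neg at hall
    obtain ⟨u₀, hu₀f, hu₀D⟩ := hall
    have hne : (f.support.filter fun u => u ∉ stdMon lin I).Nonempty :=
      ⟨u₀, Finset.mem_filter.mpr ⟨hu₀f, hu₀D⟩⟩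
    obtain ⟨us, husmem, husmax⟩ := exists_linMax lin hne
    exact main us f (fun x hx hxD => husmax x (Finset.mem_filter.mpr ⟨hx, hxD⟩))

private lemma exists_degdom {I : Ideal (MvPolynomial (Fin n) F)} {D : Set (Mon n)}
    (HD : ∀ σ : Equiv.Perm (Fin n), stdMon (lexLO σ) I = D)
    {w : Mon n} (hw : w ∉ D) :
    ∃ p : MvPolynomial (Fin n) F, p ∈ I ∧ p.coeff w = 1 ∧
      (∀ v ∈ p.support, v ≤ w) ∧ (∀ v ∈ p.support, v ≠ w → v ∈ D) := by
  classical
  have hred : ∀ σ : Equiv.Perm (Fin n),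
      ∃ g : MvPolynomial (Fin n) F, (MvPolynomial.monomial w (1 : F)) - g ∈ I ∧
        (∀ u ∈ g.support, u ∈ D) ∧ ∀ u ∈ g.support, lexLt σ u w := by
    intro σ
    obtain ⟨g, h1, h2, h3⟩ := reduce (isLexOrder_lexLO σ).isTermOrder.wf I
      (MvPolynomial.monomial w (1 : F))
    have h2' : ∀ u ∈ g.support, u ∈ D := fun u hu => (HD σ) ▸ h2 u hu
    refine ⟨g, h1, h2', fun u hu => ?_⟩
    obtain ⟨v, hv, hle⟩ := h3 u hu
    have hvw : v = w := by
      rw [MvPolynomial.support_monomial, if_neg (one_ne_zero)] at hv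
      exact Finset.mem_singleton.mp hv
    have hne : u ≠ w := fun he => hw (he ▸ h2' u hu)
    exact (lexLO_lt_iff σ u w).mp (linLt_of_le_of_ne (lexLO σ) (hvw ▸ hle) hne)
  obtain ⟨r, hr1, hr2, _⟩ := hred 1
  have huniq : ∀ σ : Equiv.Perm (Fin n), ∀ u ∈ r.support, lexLt σ u w := by
    intro σ
    obtain ⟨g, hg1, hg2, hg3⟩ := hred σ
    have hrg : r = g := by
      have hmem : r - g ∈ I := by
        have := I.sub_mem hg1 hr1
        simpa using this
      have hz : r - g = 0 := by
        refine eq_zero_of_supp_subset (lexLO 1) hmem (fun u hu => ?_)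
        rcases Finset.mem_union.mp (MvPolynomial.support_sub _ r g hu) with h | h
        · exact (HD 1).symm ▸ hr2 u h
        · exact (HD 1).symm ▸ hg2 u h
      exact sub_eq_zero.mp hz
    intro u hu
    exact hg3 u (hrg ▸ hu)
  have hle : ∀ u ∈ r.support, u ≤ w := by
    intro u hu
    rw [Finsupp.le_def]
    intro i
    have hz : (0 : ℕ) < n := i.pos
    set z : Fin n := ⟨0, hz⟩ with hzdef
    obtain ⟨j, hj1, hj2⟩ := huniq (Equiv.swap z i) u hu
    rcases lt_or_ge z j with hzj | hjz
    · have := hj2 z hzj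
      rw [Equiv.swap_apply_left] at this
      exact this.le
    · have hjz' : j = z := le_antisymm hjz (by simp [hzdef, Fin.le_def])
      rw [hjz', Equiv.swap_apply_left] at hj1
      exact hj1.le
  have hwr : r.coeff w = 0 := by
    rw [← MvPolynomial.notMem_support_iff]
    exact fun hc => hw (hr2 w hc)
  refine ⟨MvPolynomial.monomial w 1 - r, hr1, ?_, ?_, ?_⟩
  · simp [MvPolynomial.coeff_sub, MvPolynomial.coeff_monomial, hwr]
  · intro v hv
    rcases Finset.mem_union.mp
        (MvPolynomial.support_sub _ (MvPolynomial.monomial w 1) r hv) with h | h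
    · rw [MvPolynomial.support_monomial, if_neg (one_ne_zero)] at h
      exact le_of_eq (Finset.mem_singleton.mp h)
    · exact hle v h
  · intro v hv hvw
    rcases Finset.mem_union.mp
        (MvPolynomial.support_sub _ (MvPolynomial.monomial w 1) r hv) with h | h
    · rw [MvPolynomial.support_monomial, if_neg (one_ne_zero)] at h
      exact absurd (Finset.mem_singleton.mp h) hvw
    · exact hr2 v h

open Classical in
private lemma lemB {I : Ideal (MvPolynomial (Fin n) F)} {D : Set (Mon n)}
    (HD : ∀ σ : Equiv.Perm (Fin n), stdMon (lexLO σ) I = D)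
    {lin : LinearOrder (Mon n)} (hlin : IsTermOrder lin) :
    ∀ k : ℕ, ∀ f : MvPolynomial (Fin n) F,
      (f.support.filter fun u => u ∉ D).card ≤ k → f ∈ I → f ≠ 0 →
      ∀ m : Mon n, IsLeadMon lin f m → m ∉ D := by
  classical
  intro k
  induction k with
  | zero =>
    intro f hcard hfI hf0 m _
    exfalso
    have hall : ∀ u ∈ f.support, u ∈ D := by
      intro u hu
      by_contra huD
      have : u ∈ f.support.filter fun u => u ∉ D := Finset.mem_filter.mpr ⟨hu, huD⟩
      have := Finset.card_pos.mpr ⟨u, this⟩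
      omega
    exact hf0 (eq_zero_of_supp_subset (lexLO 1) hfI
      (fun u hu => (HD 1).symm ▸ hall u hu))
  | succ k IH =>
    intro f hcard hfI hf0 m hlm
    by_contra hmD
    by_cases hall : ∀ u ∈ f.support, u ∈ D
    · exact hf0 (eq_zero_of_supp_subset (lexLO 1) hfI
        (fun u hu => (HD 1).symm ▸ hall u hu))
    · push_neg at hall
      obtain ⟨u₀, hu₀f, hu₀D⟩ := hall
      have hne : (f.support.filter fun u => u ∉ D).Nonempty :=
        ⟨u₀, Finset.mem_filter.mpr ⟨hu₀f, hu₀D⟩⟩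
      obtain ⟨us, husmem, husmax⟩ := exists_linMax lin hne
      have hus_f : us ∈ f.support := (Finset.mem_filter.mp husmem).1
      have hus_D : us ∉ D := (Finset.mem_filter.mp husmem).2
      obtain ⟨p, hpI, hpc, hple, hpD⟩ := exists_degdom HD hus_D
      have hmus : m ≠ us := fun h => hus_D (h ▸ hmD)
      have husm : lin.lt us m :=
        linLt_of_le_of_ne lin (hlm.2 us hus_f) (fun h => hmus h.symm)
      set c := f.coeff us with hcdef
      set f' := f - C c * p with hf'def
      have hf'I : f' ∈ I := I.sub_mem hfI (I.mul_mem_left _ hpI)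
      have hpm : p.coeff m = 0 := by
        by_contra hpm
        have hmp : m ∈ p.support := MvPolynomial.mem_support_iff.mpr hpm
        have h1 : lin.le m us := hlin.le_of_le (hple m hmp)
        rw [lin.lt_iff_le_not_ge] at husm
        exact husm.2 h1
      have hcoefm : f'.coeff m = f.coeff m := by
        simp [hf'def, MvPolynomial.coeff_sub, MvPolynomial.coeff_C_mul, hpm]
      have hm_supp : m ∈ f'.support :=
        MvPolynomial.mem_support_iff.mpr
          (hcoefm ▸ MvPolynomial.mem_support_iff.mp hlm.1)
      have hf'0 : f' ≠ 0 := fun h => by simp [h] at hm_supp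
      have hsub : f'.support ⊆ f.support ∪ p.support := by
        intro x hx
        rcases Finset.mem_union.mp (MvPolynomial.support_sub _ f (C c * p) hx) with h | h
        · exact Finset.mem_union_left _ h
        · refine Finset.mem_union_right _ ?_
          have := MvPolynomial.support_smul (a := c) (f := p)
          rw [MvPolynomial.smul_eq_C_mul] at this
          exact this h
      have hlm' : IsLeadMon lin f' m := by
        refine ⟨hm_supp, fun v hv => ?_⟩
        rcases Finset.mem_union.mp (hsub hv) with h | h
        · exact hlm.2 v h
        · exact lin.le_trans _ _ _ (hlin.le_of_le (hple v h)) (hlm.2 us hus_f)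
      have hcoefus : f'.coeff us = 0 := by
        simp [hf'def, MvPolynomial.coeff_sub, MvPolynomial.coeff_C_mul, hpc, hcdef]
      have hsubN : (f'.support.filter fun u => u ∉ D) ⊆
          (f.support.filter fun u => u ∉ D).erase us := by
        intro x hx
        obtain ⟨hx1, hx2⟩ := Finset.mem_filter.mp hx
        have hxus : x ≠ us := by
          intro h
          rw [h] at hx1
          exact MvPolynomial.mem_support_iff.mp hx1 hcoefus
        refine Finset.mem_erase.mpr ⟨hxus, Finset.mem_filter.mpr ⟨?_, hx2⟩⟩
        rcases Finset.mem_union.mp (hsub hx1) with h | h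
        · exact h
        · exact absurd (hpD x h hxus) hx2
      have hcard' : (f'.support.filter fun u => u ∉ D).card ≤ k := by
        have h1 := Finset.card_le_card hsubN
        have h2 := Finset.card_erase_of_mem husmem
        omega
      exact (IH f' hcard' hf'I hf'0 m hlm') hmD

open Classical in
private lemma stdMon_eq_of_termOrder {I : Ideal (MvPolynomial (Fin n) F)}
    (H : ∀ (σ₁ σ₂ : Equiv.Perm (Fin n)) (lin₁ lin₂ : LinearOrder (Mon n)),
        IsLexOrder σ₁ lin₁ → IsLexOrder σ₂ lin₂ → stdMon lin₁ I = stdMon lin₂ I)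
    {lin : LinearOrder (Mon n)} (hlin : IsTermOrder lin) :
    stdMon lin I = stdMon (lexLO (1 : Equiv.Perm (Fin n))) I := by
  classical
  set D := stdMon (lexLO (1 : Equiv.Perm (Fin n))) I with hDdef
  have HD : ∀ σ : Equiv.Perm (Fin n), stdMon (lexLO σ) I = D :=
    fun σ => H σ 1 _ _ (isLexOrder_lexLO σ) (isLexOrder_lexLO 1)
  ext w
  constructor
  · intro hwstd
    by_contra hwD
    obtain ⟨p, hpI, hpc, hple, _⟩ := exists_degdom HD hwD
    have hp0 : p ≠ 0 := by
      intro h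
      rw [h] at hpc
      simp at hpc
    have hwsupp : w ∈ p.support := MvPolynomial.mem_support_iff.mpr (by rw [hpc]; exact one_ne_zero)
    exact hwstd ⟨p, hpI, hp0, hwsupp, fun v hv => hlin.le_of_le (hple v hv)⟩
  · intro hwD
    rintro ⟨f, hfI, hf0, hlm⟩
    exact (lemB HD hlin (f.support.filter fun u => u ∉ D).card f le_rfl hfI hf0 w hlm) hwD

end Aux

/-- Proposition `lex<=>all term orders`.
For a finite point set `𝒱 ⊆ Aⁿ` with `A ⊆ 𝔽` finite, `Sm(I(𝒱))` is the same for every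
lexicographic term order if and only if it is the same for every term order. -/
theorem stdMon_lex_invariant_iff_all_invariant {n : ℕ} {F : Type*} [Field F]
    (A : Finset F) (V : Finset (Fin n → F)) (hV : ∀ v ∈ V, ∀ i : Fin n, v i ∈ A) :
    (∀ (σ₁ σ₂ : Equiv.Perm (Fin n)) (lin₁ lin₂ : LinearOrder (Mon n)),
        IsLexOrder σ₁ lin₁ → IsLexOrder σ₂ lin₂ →
          stdMon lin₁ (vanishIdeal (V : Set (Fin n → F))) =
            stdMon lin₂ (vanishIdeal (V : Set (Fin n → F)))) ↔
      (∀ lin₁ lin₂ : LinearOrder (Mon n), IsTermOrder lin₁ → IsTermOrder lin₂ →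
        stdMon lin₁ (vanishIdeal (V : Set (Fin n → F))) =
          stdMon lin₂ (vanishIdeal (V : Set (Fin n → F)))) := by
  constructor
  · intro H lin₁ lin₂ h₁ h₂
    rw [stdMon_eq_of_termOrder H h₁, stdMon_eq_of_termOrder H h₂]
  · intro H σ₁ σ₂ lin₁ lin₂ h₁ h₂
    exact H lin₁ lin₂ h₁.isTermOrder h₂.isTermOrder
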